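/- arXiv:2212.05739 — 2 statements merged into one kernel-verified Lean document; each statement's English description precedes it below -/
import Mathlib

section
/- If n ≥ 4 is an even integer, then λ(K⁺_{n/2,n/2}) > n/2 + 2/n; if n ≥ 5 is an odd integer, then λ(K⁺_{(n−1)/2,(n+1)/2}) > n/2 + 3/(2n). -/
open SimpleGraph

/-- The spectral radius (largest adjacency eigenvalue) of a finite simple graph. -/
noncomputable def specRad {V : Type*} [Fintype V] (G : SimpleGraph V) : ℝ :=
  letI : DecidableEq V := Classical.decEq V
  letI : DecidableRel G.Adj := Classical.decRel _
  sSup (spectrum ℝ (G.adjMatrix ℝ))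

/-- `KplusAB a b` : the complete bipartite graph `K_{a,b}` with one extra edge
(between vertices `0` and `1`) inside the part of size `a`. -/
def KplusAB (a b : ℕ) : SimpleGraph (Fin a ⊕ Fin b) where
  Adj x y :=
    match x, y with
    | .inl i, .inl j => (i.val = 0 ∧ j.val = 1) ∨ (i.val = 1 ∧ j.val = 0)
    | .inl _, .inr _ => True
    | .inr _, .inl _ => True
    | .inr _, .inr _ => False
  symm := by constructor; rintro (i | i) (j | j) h <;> simp_all <;> tauto
  loopless := by constructor; rintro (i | i) h <;> simp_all <;> omega

open Matrix in
lemma quad_le_sSup_spectrum {V : Type*} [Fintype V] [DecidableEq V] [Nonempty V]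
    (A : Matrix V V ℝ) (hA : A.IsHermitian) (x : V → ℝ) :
    x ⬝ᵥ (A *ᵥ x) ≤ sSup (spectrum ℝ A) * (x ⬝ᵥ x) := by
  classical
  set M := sSup (spectrum ℝ A) with hM
  have hbdd : BddAbove (spectrum ℝ A) := (Matrix.finite_spectrum A).bddAbove
  have hle : ∀ i : V, hA.eigenvalues i ≤ M := fun i =>
    le_csSup hbdd (hA.eigenvalues_mem_spectrum_real i)
  set U : Matrix V V ℝ := (hA.eigenvectorUnitary : Matrix V V ℝ) with hU
  have hstar : star U = Uᵀ := by
    rw [Matrix.star_eq_conjTranspose, Matrix.conjTranspose_eq_transpose_of_trivial]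
  set c : V → ℝ := Uᵀ *ᵥ x with hc
  have hUU : U * Uᵀ = 1 := by
    rw [← hstar]; exact (Matrix.mem_unitaryGroup_iff).mp hA.eigenvectorUnitary.2
  have hxx : c ⬝ᵥ c = x ⬝ᵥ x := by
    rw [hc, Matrix.mulVec_transpose, ← Matrix.dotProduct_mulVec,
      Matrix.mulVec_vecMul, hUU, Matrix.one_mulVec]
  have hAx : x ⬝ᵥ (A *ᵥ x) = c ⬝ᵥ (Matrix.diagonal (RCLike.ofReal ∘ hA.eigenvalues) *ᵥ c) := by
    conv_lhs => rw [hA.spectral_theorem, Unitary.conjStarAlgAut_apply, hstar]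
    rw [hc, ← Matrix.mulVec_mulVec, ← Matrix.mulVec_mulVec, Matrix.dotProduct_mulVec,
      ← Matrix.mulVec_transpose]
  rw [hAx, ← hxx]
  have hdiag : c ⬝ᵥ (Matrix.diagonal (RCLike.ofReal ∘ hA.eigenvalues) *ᵥ c)
      = ∑ i, hA.eigenvalues i * (c i)^2 := by
    simp only [dotProduct, Matrix.mulVec_diagonal, Function.comp_apply,
      RCLike.ofReal_real_eq_id, id_eq]
    exact Finset.sum_congr rfl fun i _ => by ring
  rw [hdiag, dotProduct, Finset.mul_sum]
  apply Finset.sum_le_sum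
  intro i _
  nlinarith [sq_nonneg (c i), hle i]

open Matrix in
lemma specRad_gt {V : Type*} [Fintype V] [Nonempty V] (G : SimpleGraph V) (t : ℝ) (x : V → ℝ)
    (h : ∀ (_ : DecidableEq V) (_ : DecidableRel G.Adj),
      0 < x ⬝ᵥ x ∧ t * (x ⬝ᵥ x) < x ⬝ᵥ (G.adjMatrix ℝ *ᵥ x)) :
    specRad G > t := by
  letI dE : DecidableEq V := Classical.decEq V
  letI dR : DecidableRel G.Adj := Classical.decRel _
  have hs : specRad G = sSup (spectrum ℝ (G.adjMatrix ℝ)) := rfl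
  obtain ⟨hx, hlt⟩ := h dE dR
  have hH : (G.adjMatrix ℝ).IsHermitian := by
    rw [Matrix.IsHermitian, Matrix.conjTranspose_eq_transpose_of_trivial]
    exact G.transpose_adjMatrix
  have key := quad_le_sSup_spectrum _ hH x
  rw [gt_iff_lt, hs]
  nlinarith [key, hx, hlt]

lemma L1 {a : ℕ} (ha : 2 ≤ a) (p q : ℝ) :
    ∑ i : Fin a, (if (i : ℕ) ≤ 1 then p else q) = 2 * p + ((a : ℝ) - 2) * q := by
  rw [Fin.sum_univ_eq_sum_range (fun k => if k ≤ 1 then p else q)]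
  rw [Finset.range_eq_Ico, ← Finset.sum_Ico_consecutive _ (Nat.zero_le 2) ha]
  have h1 : ∑ k ∈ Finset.Ico 0 2, (if k ≤ 1 then p else q) = 2 * p := by
    rw [← Finset.range_eq_Ico, Finset.sum_range_succ, Finset.sum_range_one]
    norm_num; ring
  have h2 : ∑ k ∈ Finset.Ico 2 a, (if k ≤ 1 then p else q) = ((a : ℝ) - 2) * q := by
    have : ∀ k ∈ Finset.Ico 2 a, (if k ≤ 1 then p else q) = q := by
      intro k hk
      rw [Finset.mem_Ico] at hk
      rw [if_neg (by omega)]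
    rw [Finset.sum_congr rfl this, Finset.sum_const, Nat.card_Ico, nsmul_eq_mul,
      Nat.cast_sub ha]
    norm_num
  rw [h1, h2]

lemma L3 {a : ℕ} {k : ℕ} (hk : k < a) (p : ℝ) :
    ∑ i : Fin a, (if (i : ℕ) = k then p else 0) = p := by
  rw [Fin.sum_univ_eq_sum_range (fun m => if m = k then p else 0),
    Finset.sum_ite_eq' (Finset.range a) k (fun _ => p), if_pos (Finset.mem_range.mpr hk)]

noncomputable def tv (a b : ℕ) (s : ℝ) : Fin a ⊕ Fin b → ℝ :=
  Sum.elim (fun i => if (i : ℕ) ≤ 1 then s else 1) fun _ => 1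

open Matrix in
lemma dot_self {a b : ℕ} (ha : 2 ≤ a) (s : ℝ) :
    tv a b s ⬝ᵥ tv a b s = 2 * s ^ 2 + ((a : ℝ) - 2) + b := by
  rw [dotProduct, Fintype.sum_sum_type]
  have h1 : ∀ i : Fin a, tv a b s (Sum.inl i) * tv a b s (Sum.inl i)
      = (if (i : ℕ) ≤ 1 then s ^ 2 else 1) := by
    intro i; simp only [tv, Sum.elim_inl]; split_ifs <;> ring
  have h2 : ∀ j : Fin b, tv a b s (Sum.inr j) * tv a b s (Sum.inr j) = 1 := by
    intro j; simp [tv]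
  rw [Finset.sum_congr rfl (fun i _ => h1 i), Finset.sum_congr rfl (fun j _ => h2 j),
    L1 ha, Finset.sum_const, Finset.card_univ, Fintype.card_fin, nsmul_eq_mul]
  ring

open Matrix in
lemma quadform {a b : ℕ} (ha : 2 ≤ a) (s : ℝ) [DecidableRel (KplusAB a b).Adj] :
    tv a b s ⬝ᵥ ((KplusAB a b).adjMatrix ℝ *ᵥ tv a b s)
      = 2 * s ^ 2 + 4 * (b : ℝ) * s + 2 * (b : ℝ) * ((a : ℝ) - 2) := by
  set A := (KplusAB a b).adjMatrix ℝ with hA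
  set x := tv a b s with hx
  have hl : ∀ i : Fin a, (A *ᵥ x) (Sum.inl i) = (if (i : ℕ) ≤ 1 then s else 0) + b := by
    intro i
    show (A (Sum.inl i)) ⬝ᵥ x = _
    rw [dotProduct, Fintype.sum_sum_type]
    have hpt : ∀ j : Fin a, A (Sum.inl i) (Sum.inl j) * x (Sum.inl j)
        = if (i : ℕ) ≤ 1 then (if (j : ℕ) = 1 - (i : ℕ) then s else 0) else 0 := by
      intro j
      rw [hA, SimpleGraph.adjMatrix_apply]
      have : (KplusAB a b).Adj (Sum.inl i) (Sum.inl j) ↔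
          ((i : ℕ) = 0 ∧ (j : ℕ) = 1) ∨ ((i : ℕ) = 1 ∧ (j : ℕ) = 0) := Iff.rfl
      rw [if_congr this rfl rfl]
      simp only [hx, tv, Sum.elim_inl]
      split_ifs <;> first | ring1 | (exfalso; omega)
    have hpt2 : ∀ j : Fin b, A (Sum.inl i) (Sum.inr j) * x (Sum.inr j) = 1 := by
      intro j
      rw [hA, SimpleGraph.adjMatrix_apply]
      have : (KplusAB a b).Adj (Sum.inl i) (Sum.inr j) ↔ True := Iff.rfl
      rw [if_congr this rfl rfl, if_pos trivial]
      simp [hx, tv]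
    rw [Finset.sum_congr rfl (fun j _ => hpt j), Finset.sum_congr rfl (fun j _ => hpt2 j),
      Finset.sum_const, Finset.card_univ, Fintype.card_fin, nsmul_eq_mul, mul_one]
    congr 1
    split_ifs with h
    · exact L3 (by omega) s
    · simp
  have hr : ∀ j : Fin b, (A *ᵥ x) (Sum.inr j) = 2 * s + ((a : ℝ) - 2) := by
    intro j
    show (A (Sum.inr j)) ⬝ᵥ x = _
    rw [dotProduct, Fintype.sum_sum_type]
    have hpt : ∀ i : Fin a, A (Sum.inr j) (Sum.inl i) * x (Sum.inl i)
        = if (i : ℕ) ≤ 1 then s else 1 := by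
      intro i
      rw [hA, SimpleGraph.adjMatrix_apply]
      have : (KplusAB a b).Adj (Sum.inr j) (Sum.inl i) ↔ True := Iff.rfl
      rw [if_congr this rfl rfl, if_pos trivial, one_mul]
      simp only [hx, tv, Sum.elim_inl]
    have hpt2 : ∀ j' : Fin b, A (Sum.inr j) (Sum.inr j') * x (Sum.inr j') = 0 := by
      intro j'
      rw [hA, SimpleGraph.adjMatrix_apply]
      have : (KplusAB a b).Adj (Sum.inr j) (Sum.inr j') ↔ False := Iff.rfl
      rw [if_congr this rfl rfl, if_neg not_false, zero_mul]
    rw [Finset.sum_congr rfl (fun i _ => hpt i), Finset.sum_congr rfl (fun j' _ => hpt2 j'),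
      L1 ha, Finset.sum_const, smul_zero]
    ring
  rw [dotProduct, Fintype.sum_sum_type]
  have h1 : ∀ i : Fin a, x (Sum.inl i) * (A *ᵥ x) (Sum.inl i)
      = if (i : ℕ) ≤ 1 then s * (s + b) else b := by
    intro i
    rw [hl i]
    simp only [hx, tv, Sum.elim_inl]
    split_ifs <;> ring
  have h2 : ∀ j : Fin b, x (Sum.inr j) * (A *ᵥ x) (Sum.inr j) = 2 * s + ((a : ℝ) - 2) := by
    intro j
    rw [hr j]
    simp [hx, tv]
  rw [Finset.sum_congr rfl (fun i _ => h1 i), Finset.sum_congr rfl (fun j _ => h2 j),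
    L1 ha, Finset.sum_const, Finset.card_univ, Fintype.card_fin, nsmul_eq_mul]
  ring

theorem Kplus_lower_bounds (n : ℕ) :
    (4 ≤ n → Even n → specRad (KplusAB (n / 2) (n / 2)) > (n : ℝ) / 2 + 2 / n) ∧
      (5 ≤ n → Odd n →
        specRad (KplusAB ((n - 1) / 2) ((n + 1) / 2)) > (n : ℝ) / 2 + 3 / (2 * n)) := by
  constructor
  · intro h4 heven
    obtain ⟨m, rfl⟩ := heven
    have hm : 2 ≤ m := by omega
    have h2 : (m + m) / 2 = m := by omega
    rw [h2]
    haveI : Nonempty (Fin m ⊕ Fin m) := ⟨Sum.inl ⟨0, by omega⟩⟩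
    have hmR2 : (2 : ℝ) ≤ (m : ℝ) := by exact_mod_cast hm
    have hd : (0 : ℝ) < (m : ℝ) ^ 2 - (m : ℝ) + 1 := by nlinarith
    set s : ℝ := (m : ℝ) ^ 2 / ((m : ℝ) ^ 2 - (m : ℝ) + 1) with hs
    apply specRad_gt _ _ (tv m m s)
    intro dE dR
    rw [dot_self hm, quadform hm]
    constructor
    · nlinarith [sq_nonneg s]
    · push_cast
      have key : (2 * s ^ 2 + 4 * (m : ℝ) * s + 2 * (m : ℝ) * ((m : ℝ) - 2))
          - (((m : ℝ) + (m : ℝ)) / 2 + 2 / ((m : ℝ) + (m : ℝ)))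
              * (2 * s ^ 2 + ((m : ℝ) - 2) + (m : ℝ))
          = 2 * ((m : ℝ) - 1) ^ 2 / ((m : ℝ) * ((m : ℝ) ^ 2 - (m : ℝ) + 1)) := by
        have hm0 : (m : ℝ) ≠ 0 := by positivity
        have hd0 : (m : ℝ) * ((m : ℝ) - 1) + 1 ≠ 0 := by apply ne_of_gt; nlinarith
        rw [hs]
        field_simp
        ring
      have hpos : 0 < 2 * ((m : ℝ) - 1) ^ 2 / ((m : ℝ) * ((m : ℝ) ^ 2 - (m : ℝ) + 1)) :=
        div_pos (by nlinarith) (by nlinarith)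
      linarith [key, hpos]
  · intro h5 hodd
    obtain ⟨m, rfl⟩ := hodd
    have hm : 2 ≤ m := by omega
    have ha : (2 * m + 1 - 1) / 2 = m := by omega
    have hb : (2 * m + 1 + 1) / 2 = m + 1 := by omega
    rw [ha, hb]
    haveI : Nonempty (Fin m ⊕ Fin (m + 1)) := ⟨Sum.inl ⟨0, by omega⟩⟩
    have hmR2 : (2 : ℝ) ≤ (m : ℝ) := by exact_mod_cast hm
    set s : ℝ := (2 * (m : ℝ) ^ 2 + 3 * (m : ℝ) + 1) / (2 * (m : ℝ) ^ 2 + 1) with hs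
    apply specRad_gt _ _ (tv m (m + 1) s)
    intro dE dR
    rw [dot_self hm, quadform hm]
    constructor
    · push_cast
      nlinarith [sq_nonneg s]
    · push_cast
      have hden : (0 : ℝ) < (2 * (m : ℝ) + 1) * (2 * (2 * (m : ℝ) ^ 2 + 1)) := by nlinarith
      have key : (2 * s ^ 2 + 4 * ((m : ℝ) + 1) * s + 2 * ((m : ℝ) + 1) * ((m : ℝ) - 2))
          - ((2 * (m : ℝ) + 1) / 2 + 3 / (2 * (2 * (m : ℝ) + 1)))
              * (2 * s ^ 2 + ((m : ℝ) - 2) + ((m : ℝ) + 1))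
          = 36 * (m : ℝ) ^ 2 / ((2 * (m : ℝ) + 1) * (2 * (2 * (m : ℝ) ^ 2 + 1))) := by
        rw [hs]
        field_simp
        ring
      have hpos : 0 < 36 * (m : ℝ) ^ 2 / ((2 * (m : ℝ) + 1) * (2 * (2 * (m : ℝ) ^ 2 + 1))) :=
        div_pos (by nlinarith) hden
      linarith [key, hpos]
end

section
/- Let a, b ≥ 2 be integers with a + b = n. Then λ(K⁺_{a,b}) ≤ λ(K⁺_{⌊n/2⌋,⌈n/2⌉}), and equality holds if and only if a = ⌊n/2⌋ and b = ⌈n/2⌉. -/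
open SimpleGraph

section Auxiliary

open Matrix

lemma Kplus.algmap_mulVec {V : Type*} [Fintype V] [DecidableEq V] (μ : ℝ) (v : V → ℝ) :
    (algebraMap ℝ (Matrix V V ℝ) μ).mulVec v = μ • v := by
  rw [Algebra.algebraMap_eq_smul_one, Matrix.smul_mulVec, Matrix.one_mulVec]

lemma Kplus.spec_iff {V : Type*} [Fintype V] [DecidableEq V] (M : Matrix V V ℝ) (μ : ℝ) :
    μ ∈ spectrum ℝ M ↔ ∃ v : V → ℝ, v ≠ 0 ∧ M.mulVec v = μ • v := by
  rw [spectrum.mem_iff, Matrix.isUnit_iff_isUnit_det, isUnit_iff_ne_zero, not_not,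
    ← Matrix.exists_mulVec_eq_zero_iff]
  constructor
  · rintro ⟨v, hv, h⟩
    rw [Matrix.sub_mulVec, Kplus.algmap_mulVec, sub_eq_zero] at h
    exact ⟨v, hv, h.symm⟩
  · rintro ⟨v, hv, h⟩
    refine ⟨v, hv, ?_⟩
    rw [Matrix.sub_mulVec, Kplus.algmap_mulVec, h, sub_self]

/-- Perron-type fact: if a symmetric nonnegative matrix has a strictly positive
eigenvector with eigenvalue `μ ≥ 0`, then `μ` is the largest point of the spectrum. -/
lemma Kplus.sSup_spectrum_eq {V : Type*} [Fintype V] [DecidableEq V] [Nonempty V]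
    (M : Matrix V V ℝ) (hM : ∀ i j, 0 ≤ M i j) (hsymm : M.IsSymm)
    (w : V → ℝ) (μ : ℝ) (hμ : 0 ≤ μ) (hw : ∀ i, 0 < w i)
    (hEig : M.mulVec w = μ • w) : sSup (spectrum ℝ M) = μ := by
  have hwne : w ≠ 0 := by
    intro h
    have := hw (Classical.arbitrary V)
    rw [h] at this
    simp at this
  have hmem : μ ∈ spectrum ℝ M := (Kplus.spec_iff M μ).mpr ⟨w, hwne, hEig⟩
  have hub : ∀ lam ∈ spectrum ℝ M, lam ≤ μ := by
    intro lam hlam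
    obtain ⟨v, hv, hve⟩ := (Kplus.spec_iff M lam).mp hlam
    set u : V → ℝ := fun i => |v i| with hu
    have h1 : ∀ i, |lam| * u i ≤ M.mulVec u i := by
      intro i
      have : |lam| * u i = |(M.mulVec v) i| := by
        rw [hve]; simp [abs_mul, hu]
      rw [this, Matrix.mulVec, dotProduct]
      refine (Finset.abs_sum_le_sum_abs _ _).trans (Finset.sum_le_sum fun j _ => ?_)
      exact le_of_eq (by rw [abs_mul, abs_of_nonneg (hM i j)])
    have hS : 0 < ∑ i, w i * u i := by
      obtain ⟨i0, hi0⟩ : ∃ i, v i ≠ 0 := by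
        by_contra h
        push_neg at h
        exact hv (funext h)
      refine Finset.sum_pos' (fun i _ => mul_nonneg (hw i).le (abs_nonneg _)) ?_
      exact ⟨i0, Finset.mem_univ _, mul_pos (hw i0) (abs_pos.mpr hi0)⟩
    have h2 : ∑ i, w i * (|lam| * u i) ≤ ∑ i, w i * M.mulVec u i :=
      Finset.sum_le_sum fun i _ => mul_le_mul_of_nonneg_left (h1 i) (hw i).le
    have h3 : ∑ i, w i * M.mulVec u i = μ * ∑ i, w i * u i := by
      have hsym' : ∀ i j, M i j = M j i := fun i j => (hsymm.apply j i)
      calc ∑ i, w i * M.mulVec u i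
          = ∑ i, ∑ j, w i * (M i j * u j) := by
            simp [Matrix.mulVec, dotProduct, Finset.mul_sum]
        _ = ∑ j, ∑ i, w i * (M i j * u j) := Finset.sum_comm
        _ = ∑ j, (M.mulVec w j) * u j := by
            refine Finset.sum_congr rfl fun j _ => ?_
            rw [Matrix.mulVec, dotProduct, Finset.sum_mul]
            refine Finset.sum_congr rfl fun i _ => ?_
            rw [hsym' i j]; ring
        _ = μ * ∑ i, w i * u i := by
            rw [hEig, Finset.mul_sum]
            refine Finset.sum_congr rfl fun j _ => ?_
            simp [smul_eq_mul]; ring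
    have h2' : |lam| * ∑ i, w i * u i ≤ μ * ∑ i, w i * u i := by
      calc |lam| * ∑ i, w i * u i = ∑ i, w i * (|lam| * u i) := by
            rw [Finset.mul_sum]; exact Finset.sum_congr rfl fun i _ => by ring
        _ ≤ μ * ∑ i, w i * u i := h2.trans_eq h3
    have := le_of_mul_le_mul_right
      (by linarith [h2'] : |lam| * (∑ i, w i * u i) ≤ μ * (∑ i, w i * u i)) hS
    exact (le_abs_self lam).trans this
  exact le_antisymm (Real.sSup_le hub hμ) (le_csSup ⟨μ, fun x hx => hub x hx⟩ hmem)

lemma Kplus.adj_ll (a b : ℕ) (i j : Fin a) :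
    (KplusAB a b).Adj (.inl i) (.inl j) ↔ ((i.val = 0 ∧ j.val = 1) ∨ (i.val = 1 ∧ j.val = 0)) :=
  Iff.rfl

lemma Kplus.adj_lr (a b : ℕ) (i : Fin a) (j : Fin b) :
    (KplusAB a b).Adj (.inl i) (.inr j) := trivial

lemma Kplus.adj_rl (a b : ℕ) (i : Fin b) (j : Fin a) :
    (KplusAB a b).Adj (.inr i) (.inl j) := trivial

lemma Kplus.adj_rr (a b : ℕ) (i j : Fin b) : ¬ (KplusAB a b).Adj (.inr i) (.inr j) := fun h => h

/-- Any root `μ > 1` of the cubic `x³ - x² - abx + (a-2)b` is the spectral radius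
of `K⁺_{a,b}`. -/
lemma Kplus.specRad_eq_root (a b : ℕ) (ha : 2 ≤ a) (hb : 2 ≤ b) (μ : ℝ) (hμ : 1 < μ)
    (hroot : μ^3 - μ^2 - ((a:ℝ)*b)*μ + ((a:ℝ)-2)*(b:ℝ) = 0) :
    specRad (KplusAB a b) = μ := by
  have hb0 : (0:ℝ) < b := by exact_mod_cast Nat.lt_of_lt_of_le Nat.zero_lt_two hb
  have hμ0 : (0:ℝ) < μ := lt_trans one_pos hμ
  have hμ1 : μ - 1 ≠ 0 := by linarith
  have hμne : μ ≠ 0 := ne_of_gt hμ0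
  haveI : Nonempty (Fin a ⊕ Fin b) := ⟨.inl ⟨0, by omega⟩⟩
  set w : Fin a ⊕ Fin b → ℝ :=
    Sum.elim (fun i => if i.val ≤ 1 then (b:ℝ)/(μ-1) else (b:ℝ)/μ) (fun _ => 1) with hwdef
  unfold specRad
  letI : DecidableRel (KplusAB a b).Adj := Classical.decRel _
  refine @Kplus.sSup_spectrum_eq _ _ (Classical.decEq _) _ _ ?_ ?_ w μ (by linarith) ?_ ?_
  · intro i j
    simp only [SimpleGraph.adjMatrix_apply]
    split_ifs <;> norm_num
  · exact SimpleGraph.isSymm_adjMatrix _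
  · rintro (i | j)
    · simp only [hwdef, Sum.elim_inl]
      split_ifs
      · exact div_pos hb0 (by linarith)
      · exact div_pos hb0 hμ0
    · simp only [hwdef, Sum.elim_inr]
      norm_num
  · funext x
    have expand : ((KplusAB a b).adjMatrix ℝ).mulVec w x
        = ∑ y, if (KplusAB a b).Adj x y then w y else 0 := by
      simp [Matrix.mulVec, dotProduct, SimpleGraph.adjMatrix_apply, ite_mul]
    rw [expand]
    rw [Fintype.sum_sum_type]
    simp only [Pi.smul_apply, smul_eq_mul]
    rcases x with i | j
    · have h2 : (∑ j : Fin b, if (KplusAB a b).Adj (.inl i) (.inr j) then w (.inr j) else 0)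
          = (b:ℝ) := by
        simp [Kplus.adj_lr, hwdef]
      by_cases hi : i.val ≤ 1
      · obtain ⟨i', hi', hadj⟩ : ∃ i' : Fin a, i'.val = 1 - i.val ∧
            (∀ j : Fin a, ((KplusAB a b).Adj (.inl i) (.inl j) ↔ j = i')) := by
          refine ⟨⟨1 - i.val, by omega⟩, rfl, fun j => ?_⟩
          rw [Kplus.adj_ll, Fin.ext_iff]
          simp only []
          omega
        have h1 : (∑ j : Fin a, if (KplusAB a b).Adj (.inl i) (.inl j) then w (.inl j) else 0)
            = (b:ℝ)/(μ-1) := by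
          rw [Finset.sum_congr rfl (fun j _ => by rw [if_congr (hadj j) rfl rfl])]
          rw [Finset.sum_ite_eq' Finset.univ i' (fun j => w (.inl j))]
          rw [if_pos (Finset.mem_univ _)]
          simp only [hwdef, Sum.elim_inl]
          rw [if_pos (by omega)]
        rw [h1, h2]
        have hwi : w (.inl i) = (b:ℝ)/(μ-1) := by
          simp only [hwdef, Sum.elim_inl]; rw [if_pos hi]
        rw [hwi]
        field_simp
        ring
      · have h1 : (∑ j : Fin a, if (KplusAB a b).Adj (.inl i) (.inl j) then w (.inl j) else 0)
            = 0 := by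
          refine Finset.sum_eq_zero fun j _ => if_neg ?_
          rw [Kplus.adj_ll]
          omega
        rw [h1, h2]
        have hwi : w (.inl i) = (b:ℝ)/μ := by
          simp only [hwdef, Sum.elim_inl]; rw [if_neg hi]
        rw [hwi]
        field_simp
        ring
    · have h2 : (∑ j' : Fin b, if (KplusAB a b).Adj (.inr j) (.inr j') then w (.inr j') else 0)
          = 0 := Finset.sum_eq_zero fun j' _ => if_neg (Kplus.adj_rr a b j j')
      have h1 : (∑ i : Fin a, if (KplusAB a b).Adj (.inr j) (.inl i) then w (.inl i) else 0)
          = 2 * ((b:ℝ)/(μ-1)) + ((a:ℝ) - 2) * ((b:ℝ)/μ) := by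
        have e1 : (∑ i : Fin a, if (KplusAB a b).Adj (.inr j) (.inl i) then w (.inl i) else 0)
            = ∑ i : Fin a, (if i.val ≤ 1 then (b:ℝ)/(μ-1) else (b:ℝ)/μ) := by
          refine Finset.sum_congr rfl fun i _ => ?_
          rw [if_pos (Kplus.adj_rl a b j i)]
          simp only [hwdef, Sum.elim_inl]
        rw [e1, Finset.sum_ite, Finset.sum_const, Finset.sum_const]
        have hcard1 : (Finset.univ.filter (fun i : Fin a => i.val ≤ 1)).card = 2 := by
          have : (Finset.univ.filter (fun i : Fin a => i.val ≤ 1))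
              = {(⟨0, by omega⟩ : Fin a), ⟨1, by omega⟩} := by
            ext i
            simp [Fin.ext_iff]
            omega
          rw [this]
          rw [Finset.card_insert_of_notMem (by simp [Fin.ext_iff]), Finset.card_singleton]
        have hcard2 : (Finset.univ.filter (fun i : Fin a => ¬ i.val ≤ 1)).card = a - 2 := by
          have := Finset.card_filter_add_card_filter_not
            (s := (Finset.univ : Finset (Fin a))) (p := fun i : Fin a => i.val ≤ 1)
          rw [hcard1] at this
          simp only [Finset.card_univ, Fintype.card_fin] at this
          omega
        rw [hcard1, hcard2, nsmul_eq_mul, nsmul_eq_mul, Nat.cast_sub ha]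
        push_cast
        ring
      rw [h1, h2]
      have hwj : w (.inr j) = 1 := rfl
      rw [hwj]
      field_simp
      linear_combination (-1 : ℝ) * hroot

/-- Intermediate-value helper: strict sign change of the cubic on `[lo, hi]`
gives a root strictly between. -/
lemma Kplus.root_between (a b : ℕ) (lo hi : ℝ) (h : lo ≤ hi)
    (hflo : lo^3 - lo^2 - ((a:ℝ)*b)*lo + ((a:ℝ)-2)*b < 0)
    (hfhi : 0 < hi^3 - hi^2 - ((a:ℝ)*b)*hi + ((a:ℝ)-2)*b) :
    ∃ μ : ℝ, lo < μ ∧ μ < hi ∧ μ^3 - μ^2 - ((a:ℝ)*b)*μ + ((a:ℝ)-2)*b = 0 := by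
  set f : ℝ → ℝ := fun x => x^3 - x^2 - ((a:ℝ)*b)*x + ((a:ℝ)-2)*b with hf
  have hc : ContinuousOn f (Set.Icc lo hi) := by fun_prop
  obtain ⟨μ, hmem, hfμ⟩ := intermediate_value_Icc h hc ⟨hflo.le, hfhi.le⟩
  refine ⟨μ, lt_of_le_of_ne hmem.1 ?_, lt_of_le_of_ne hmem.2 ?_, hfμ⟩
  · intro heq
    rw [← heq] at hfμ
    exact absurd hfμ (ne_of_lt hflo)
  · intro heq
    rw [heq] at hfμ
    exact absurd hfμ (ne_of_gt hfhi)

lemma Kplus.exists_root_gt (a b : ℕ) (lo : ℝ) (ha : 2 ≤ a) (hb : 2 ≤ b) (hlo : 1 ≤ lo)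
    (hloab : lo ≤ (a:ℝ)*b)
    (hflo : lo^3 - lo^2 - ((a:ℝ)*b)*lo + ((a:ℝ)-2)*b < 0) :
    ∃ μ : ℝ, lo < μ ∧ μ^3 - μ^2 - ((a:ℝ)*b)*μ + ((a:ℝ)-2)*b = 0 := by
  have hb0 : (0:ℝ) ≤ b := Nat.cast_nonneg b
  have ha2 : (2:ℝ) ≤ a := by exact_mod_cast ha
  have hb2 : (2:ℝ) ≤ b := by exact_mod_cast hb
  have hab4 : (4:ℝ) ≤ (a:ℝ)*b := by nlinarith
  set X : ℝ := (a:ℝ)*b + 2 with hX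
  have hXlo : lo ≤ X := by linarith
  have hfX : 0 < X^3 - X^2 - ((a:ℝ)*b)*X + ((a:ℝ)-2)*b := by
    simp only [hX]
    nlinarith [sq_nonneg ((a:ℝ)*b), mul_nonneg (by linarith : (0:ℝ) ≤ (a:ℝ)-2) hb0]
  obtain ⟨μ, h1, _, h3⟩ := Kplus.root_between a b lo X hXlo hflo hfX
  exact ⟨μ, h1, h3⟩

end Auxiliary

set_option maxHeartbeats 1000000 in
theorem Kplus_balanced_is_max (a b n : ℕ) (ha : 2 ≤ a) (hb : 2 ≤ b) (hab : a + b = n) :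
    specRad (KplusAB a b) ≤ specRad (KplusAB (n / 2) ((n + 1) / 2)) ∧
      (specRad (KplusAB a b) = specRad (KplusAB (n / 2) ((n + 1) / 2)) ↔
        a = n / 2 ∧ b = (n + 1) / 2) := by
  set a0 : ℕ := n / 2 with ha0d
  set b0 : ℕ := (n + 1) / 2 with hb0d
  have ha0 : 2 ≤ a0 := by omega
  have hb0 : 2 ≤ b0 := by omega
  have hsum : a0 + b0 = n := by omega
  have hA2 : (2:ℝ) ≤ a := by exact_mod_cast ha
  have hB2 : (2:ℝ) ≤ b := by exact_mod_cast hb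
  have hA02 : (2:ℝ) ≤ a0 := by exact_mod_cast ha0
  have hB02 : (2:ℝ) ≤ b0 := by exact_mod_cast hb0
  have hA0B0 : (a0:ℝ) ≤ b0 := by exact_mod_cast (by omega : a0 ≤ b0)
  have hB0A0 : (b0:ℝ) ≤ (a0:ℝ) + 1 := by exact_mod_cast (by omega : b0 ≤ a0 + 1)
  have ea : (a:ℝ) + (b:ℝ) = (a0:ℝ) + (b0:ℝ) := by exact_mod_cast (by omega : a + b = a0 + b0)
  -- spectral radii as roots of the cubics
  obtain ⟨μ, hμ1, hμroot⟩ := Kplus.exists_root_gt a b 1 ha hb le_rfl (by nlinarith) (by nlinarith)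
  obtain ⟨μ0, hμ01, hμ0root⟩ :=
    Kplus.exists_root_gt a0 b0 1 ha0 hb0 le_rfl (by nlinarith) (by nlinarith)
  have hspec : specRad (KplusAB a b) = μ := Kplus.specRad_eq_root a b ha hb μ hμ1 hμroot
  have hspec0 : specRad (KplusAB a0 b0) = μ0 :=
    Kplus.specRad_eq_root a0 b0 ha0 hb0 μ0 hμ01 hμ0root
  by_cases hcase : a = a0
  · have hb' : b = b0 := by omega
    have hroot' : μ0^3 - μ0^2 - ((a:ℝ)*b)*μ0 + ((a:ℝ)-2)*(b:ℝ) = 0 := by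
      rw [hcase, hb']; exact hμ0root
    have heq : specRad (KplusAB a b) = specRad (KplusAB a0 b0) := by
      rw [hspec0]
      exact Kplus.specRad_eq_root a b ha hb μ0 hμ01 hroot'
    exact ⟨le_of_eq heq, by simp [heq, hcase, hb']⟩
  · -- strict case
    have hbne : b ≠ b0 := by omega
    have hpos : 0 < μ0^3 - μ0^2 - ((a:ℝ)*b)*μ0 + ((a:ℝ)-2)*(b:ℝ) := by
      rcases lt_or_gt_of_ne hbne with hblt | hbgt
      · have hd1 : (1:ℝ) ≤ (b0:ℝ) - b := by
          have : b + 1 ≤ b0 := hblt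
          have := (by exact_mod_cast this : (b:ℝ) + 1 ≤ (b0:ℝ))
          linarith
        have hd2 : (0:ℝ) ≤ (a0:ℝ) - b := by
          have : b ≤ a0 := by omega
          have := (by exact_mod_cast this : (b:ℝ) ≤ (a0:ℝ))
          linarith
        have key2 : μ0^3 - μ0^2 - ((a:ℝ)*b)*μ0 + ((a:ℝ)-2)*(b:ℝ)
            = ((b0:ℝ)-b)*((a0:ℝ)-b)*(μ0-1) + 2*((b0:ℝ)-b) := by
          linear_combination hμ0root + ((b:ℝ)*(1-μ0))*ea
        rw [key2]
        nlinarith [mul_nonneg (mul_nonneg (by linarith : (0:ℝ) ≤ (b0:ℝ)-b) hd2)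
          (by linarith : (0:ℝ) ≤ μ0 - 1)]
      · -- b > b0, so a < a0 and a0, b0 ≥ 3; here we need μ0 > 3
        have ha03 : 3 ≤ a0 := by omega
        have hb03 : 3 ≤ b0 := by omega
        have hA03 : (3:ℝ) ≤ a0 := by exact_mod_cast ha03
        have hB03 : (3:ℝ) ≤ b0 := by exact_mod_cast hb03
        have hf3 : (3:ℝ)^3 - 3^2 - ((a0:ℝ)*b0)*3 + ((a0:ℝ)-2)*b0 < 0 := by nlinarith
        obtain ⟨ρ, hρ3, hρroot⟩ := Kplus.exists_root_gt a0 b0 3 ha0 hb0 (by norm_num)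
          (by nlinarith) hf3
        have hμ0ρ : μ0 = ρ := by
          rw [← hspec0, Kplus.specRad_eq_root a0 b0 ha0 hb0 ρ (by linarith) hρroot]
        have hμ03 : 3 < μ0 := by rw [hμ0ρ]; exact hρ3
        have hd1 : (1:ℝ) ≤ (b:ℝ) - b0 := by
          have : b0 + 1 ≤ b := hbgt
          have := (by exact_mod_cast this : (b0:ℝ) + 1 ≤ (b:ℝ))
          linarith
        have hd2 : (1:ℝ) ≤ (b:ℝ) - a0 := by
          have : a0 + 1 ≤ b := by omega
          have := (by exact_mod_cast this : (a0:ℝ) + 1 ≤ (b:ℝ))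
          linarith
        have key2 : μ0^3 - μ0^2 - ((a:ℝ)*b)*μ0 + ((a:ℝ)-2)*(b:ℝ)
            = ((b:ℝ)-b0)*(((b:ℝ)-a0)*(μ0-1) - 2) := by
          linear_combination hμ0root + ((b:ℝ)*(1-μ0))*ea
        rw [key2]
        have hinner : (0:ℝ) < ((b:ℝ)-a0)*(μ0-1) - 2 := by
          nlinarith [mul_le_mul_of_nonneg_right hd2 (by linarith : (0:ℝ) ≤ μ0 - 1)]
        nlinarith
    -- a root of the (a,b)-cubic strictly between 1 and μ0
    obtain ⟨ρ, hρ1, hρμ0, hρroot⟩ := Kplus.root_between a b 1 μ0 (by linarith)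
      (by nlinarith) hpos
    have hμρ : μ = ρ := by
      rw [← hspec, Kplus.specRad_eq_root a b ha hb ρ hρ1 hρroot]
    have hlt : specRad (KplusAB a b) < specRad (KplusAB a0 b0) := by
      rw [hspec, hspec0, hμρ]
      exact hρμ0
    refine ⟨le_of_lt hlt, ?_⟩
    constructor
    · intro h
      exact absurd h (ne_of_lt hlt)
    · rintro ⟨h1, _⟩
      exact absurd h1 hcase
end
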